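/- Let M = {M_1, M_2} be a binary MMDP and suppose a stationary policy π achieves asymptotic perfect detection for M, i.e., lim_{t→∞} B(t, π) = 0. Then the Bhattacharyya coefficient converges exponentially fast: there exist c > 0 and λ ∈ (0,1) such that B(t, π) ≤ c·λ^t for all t ∈ ℕ. -/

import Mathlib

open Finset Filter

/-- A history of length `t` of an MDP with states `S` and actions `A`:
a sequence of `t+1` states and `t` actions `(s₀, a₀, s₁, …, a_{t-1}, s_t)`. -/
abbrev Hist (S A : Type) (t : ℕ) : Type := (Fin (t + 1) → S) × (Fin t → A)

/-- The last state of a history. -/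
def lastState {S A : Type} {t : ℕ} (h : Hist S A t) : S := h.1 (Fin.last t)

/-- The length-`τ` prefix of a history of length `t` (for `τ < t`). -/
def prefixH {S A : Type} {t : ℕ} (h : Hist S A t) (τ : Fin t) : Hist S A τ.val :=
  (fun i => h.1 (Fin.castLE (Nat.succ_le_succ τ.isLt.le) i),
   fun i => h.2 (Fin.castLE τ.isLt.le i))

/-- A history-dependent randomized policy over the available-action map `act`:
for every time `t` and history `h` of length `t` it gives a probability
distribution over the actions available at the last state of `h`. -/
structure Policy (S A : Type) [Fintype S] [Fintype A] (act : S → Finset A) where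
  p : (t : ℕ) → Hist S A t → A → ℝ
  nonneg : ∀ (t : ℕ) (h : Hist S A t) (a : A), 0 ≤ p t h a
  sum_one : ∀ (t : ℕ) (h : Hist S A t), ∑ a ∈ act (lastState h), p t h a = 1
  zero_off : ∀ (t : ℕ) (h : Hist S A t), ∀ a ∉ act (lastState h), p t h a = 0

/-- The probability `P^π(h)` of a history `h` of length `t` under the transition kernel `δ`
    and (the underlying map `πf` of) a policy, starting from the initial state `init`. -/
noncomputable def histProb {S A : Type} [Fintype S] [Fintype A] [DecidableEq S]
    (init : S) (δ : S → A → S → ℝ)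
    (πf : (t : ℕ) → Hist S A t → A → ℝ) (t : ℕ) (h : Hist S A t) : ℝ :=
  (if h.1 0 = init then (1 : ℝ) else 0) *
    ∏ τ : Fin t,
      πf τ.val (prefixH h τ) (h.2 τ) * δ (h.1 τ.castSucc) (h.2 τ) (h.1 τ.succ)

/-- The Bhattacharyya coefficient at step `t` between the history distributions induced by
the kernels `δ1` and `δ2` under the policy map `πf`:
`B(t,π) = Σ_{h_t} √(P₁^π(h_t)·P₂^π(h_t))`. -/
noncomputable def BC {S A : Type} [Fintype S] [Fintype A] [DecidableEq S]
    (init : S) (δ1 δ2 : S → A → S → ℝ)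
    (πf : (t : ℕ) → Hist S A t → A → ℝ) (t : ℕ) : ℝ :=
  ∑ h : Hist S A t,
    Real.sqrt (histProb init δ1 πf t h * histProb init δ2 πf t h)

/-- A binary MMDP: two MDPs sharing the state space `S`, available actions `act`,
and initial state `init`, with transition kernels `δ 0` and `δ 1`. -/
structure BinMMDP (S A : Type) [Fintype S] [Fintype A] where
  act : S → Finset A
  act_nonempty : ∀ s, (act s).Nonempty
  init : S
  δ : Fin 2 → S → A → S → ℝ
  δ_nonneg : ∀ i s a s', 0 ≤ δ i s a s'
  δ_sum : ∀ i s, ∀ a ∈ act s, ∑ s', δ i s a s' = 1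

/-- A stationary (Markovian, time-independent) randomized policy: a distribution over the
available actions at each state. -/
structure StatPolicy (S A : Type) [Fintype S] [Fintype A] (act : S → Finset A) where
  p : S → A → ℝ
  nonneg : ∀ s a, 0 ≤ p s a
  sum_one : ∀ s, ∑ a ∈ act s, p s a = 1
  zero_off : ∀ s, ∀ a ∉ act s, p s a = 0

/-- The history-dependent policy map induced by a stationary policy: it acts according to
the distribution attached to the last state of the history. -/
def StatPolicy.lift {S A : Type} [Fintype S] [Fintype A] {act : S → Finset A}
    (σ : StatPolicy S A act) : (t : ℕ) → Hist S A t → A → ℝ :=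
  fun _ h a => σ.p (lastState h) a

section Aux
variable {S A : Type} [Fintype S] [Fintype A] [DecidableEq S] {act : S → Finset A}

set_option linter.unusedSectionVars false

lemma histProb_lift (init : S) (δ : S → A → S → ℝ) (σ : StatPolicy S A act)
    (t : ℕ) (h : Hist S A t) :
    histProb init δ σ.lift t h = (if h.1 0 = init then (1:ℝ) else 0) *
      ∏ τ : Fin t, σ.p (h.1 τ.castSucc) (h.2 τ) * δ (h.1 τ.castSucc) (h.2 τ) (h.1 τ.succ) := rfl

lemma histProb_nonneg (init : S) (δ : S → A → S → ℝ) (hδ : ∀ s a s', 0 ≤ δ s a s')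
    (σ : StatPolicy S A act) (t : ℕ) (h : Hist S A t) :
    0 ≤ histProb init δ σ.lift t h := by
  unfold histProb
  apply mul_nonneg (by split <;> norm_num)
  exact Finset.prod_nonneg fun τ _ => mul_nonneg (σ.nonneg _ _) (hδ _ _ _)

lemma histProb_eq_ite (init : S) (δ : S → A → S → ℝ)
    (πf : (t : ℕ) → Hist S A t → A → ℝ) (t : ℕ) (h : Hist S A t) :
    histProb init δ πf t h
      = (if h.1 0 = init then (1:ℝ) else 0) * histProb (h.1 0) δ πf t h := by
  unfold histProb
  rw [if_pos rfl, one_mul]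

def consHist {t : ℕ} : (S × A × Hist S A t) ≃ Hist S A (t+1) where
  toFun x := (Fin.cons x.1 x.2.2.1, Fin.cons x.2.1 x.2.2.2)
  invFun h := (h.1 0, h.2 0, (fun i => h.1 i.succ, fun i => h.2 i.succ))
  left_inv := by rintro ⟨s, a, h1, h2⟩; simp
  right_inv := by
    rintro ⟨h1, h2⟩
    simp only [Prod.mk.injEq]
    constructor <;> exact Fin.cons_self_tail _

lemma histProb_cons (init : S) (δ : S → A → S → ℝ) (σ : StatPolicy S A act)
    (t : ℕ) (s0 : S) (a0 : A) (g : Hist S A t) :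
    histProb init δ σ.lift (t+1) (consHist (s0, a0, g))
      = (if s0 = init then (1:ℝ) else 0) * (σ.p s0 a0 * δ s0 a0 (g.1 0))
        * histProb (g.1 0) δ σ.lift t g := by
  rw [histProb_lift, histProb_lift, Fin.prod_univ_succ, if_pos rfl, one_mul]
  have e0 : (consHist (s0, a0, g) : Hist S A (t+1)).1 0 = s0 := rfl
  have hterm0 : σ.p ((consHist (s0,a0,g) : Hist S A (t+1)).1 (Fin.castSucc 0))
        ((consHist (s0,a0,g)).2 0)
      * δ ((consHist (s0,a0,g)).1 (Fin.castSucc 0)) ((consHist (s0,a0,g)).2 0)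
        ((consHist (s0,a0,g)).1 (Fin.succ 0))
      = σ.p s0 a0 * δ s0 a0 (g.1 0) := by
    simp [consHist]
  have hterms : ∀ τ : Fin t,
      σ.p ((consHist (s0,a0,g) : Hist S A (t+1)).1 (Fin.castSucc (Fin.succ τ)))
        ((consHist (s0,a0,g)).2 (Fin.succ τ))
      * δ ((consHist (s0,a0,g)).1 (Fin.castSucc (Fin.succ τ))) ((consHist (s0,a0,g)).2 (Fin.succ τ))
        ((consHist (s0,a0,g)).1 (Fin.succ (Fin.succ τ)))
      = σ.p (g.1 τ.castSucc) (g.2 τ) * δ (g.1 τ.castSucc) (g.2 τ) (g.1 τ.succ) := by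
    intro τ
    have h1 : (Fin.castSucc (Fin.succ τ)) = Fin.succ (Fin.castSucc τ) := by
      ext; simp
    simp [consHist, h1]
  rw [hterm0, Finset.prod_congr rfl (fun τ _ => hterms τ)]
  rw [e0]
  ring
lemma sqrt_factor (i p d1 d2 P1 P2 : ℝ) (hi : i = 0 ∨ i = 1) (hp : 0 ≤ p)
    (hd1 : 0 ≤ d1) (hd2 : 0 ≤ d2) :
    Real.sqrt ((i * (p * d1) * P1) * (i * (p * d2) * P2))
      = i * p * Real.sqrt (d1 * d2) * Real.sqrt (P1 * P2) := by
  rcases hi with hi | hi <;> subst hi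
  · simp
  · rw [show ((1:ℝ) * (p * d1) * P1) * (1 * (p * d2) * P2)
        = (p * p) * ((d1 * d2) * (P1 * P2)) by ring,
      Real.sqrt_mul (mul_self_nonneg p), Real.sqrt_mul_self hp,
      Real.sqrt_mul (by positivity)]
    ring

lemma BC_zero (init : S) (δ1 δ2 : S → A → S → ℝ)
    (πf : (t : ℕ) → Hist S A t → A → ℝ) : BC init δ1 δ2 πf 0 = 1 := by
  unfold BC histProb
  rw [Fintype.sum_prod_type]
  simp only [Finset.univ_unique, Finset.sum_singleton, Finset.univ_eq_empty,
    Finset.prod_empty, mul_one]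
  have key : ∀ x : Fin 1 → S,
      Real.sqrt ((if x 0 = init then (1:ℝ) else 0) * (if x 0 = init then (1:ℝ) else 0))
        = if x 0 = init then (1:ℝ) else 0 := fun x => by split <;> simp
  rw [Finset.sum_congr rfl (fun x _ => key x)]
  exact (Fintype.sum_equiv (Equiv.funUnique (Fin 1) S) _
      (fun s : S => if s = init then (1:ℝ) else 0) (fun x => rfl)).trans (by simp)

lemma BC_succ (δ1 δ2 : S → A → S → ℝ)
    (h1 : ∀ s a s', 0 ≤ δ1 s a s') (h2 : ∀ s a s', 0 ≤ δ2 s a s')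
    (σ : StatPolicy S A act) (s : S) (t : ℕ) :
    BC s δ1 δ2 σ.lift (t+1)
      = ∑ s' : S, (∑ a : A, σ.p s a * Real.sqrt (δ1 s a s' * δ2 s a s'))
          * BC s' δ1 δ2 σ.lift t := by
  have key : ∀ (s0 : S) (a0 : A) (g : Hist S A t),
      Real.sqrt (histProb s δ1 σ.lift (t+1) (consHist (s0,a0,g))
          * histProb s δ2 σ.lift (t+1) (consHist (s0,a0,g)))
        = (if s0 = s then (1:ℝ) else 0) *
            (σ.p s0 a0 * Real.sqrt (δ1 s0 a0 (g.1 0) * δ2 s0 a0 (g.1 0)) *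
              Real.sqrt (histProb (g.1 0) δ1 σ.lift t g * histProb (g.1 0) δ2 σ.lift t g)) := by
    intro s0 a0 g
    rw [histProb_cons, histProb_cons,
      sqrt_factor _ _ _ _ _ _ (by by_cases h : s0 = s <;> simp [h]) (σ.nonneg _ _)
        (h1 _ _ _) (h2 _ _ _)]
    ring
  have key2 : ∀ (s' : S) (g : Hist S A t),
      Real.sqrt (histProb s' δ1 σ.lift t g * histProb s' δ2 σ.lift t g)
        = (if g.1 0 = s' then (1:ℝ) else 0) *
            Real.sqrt (histProb (g.1 0) δ1 σ.lift t g * histProb (g.1 0) δ2 σ.lift t g) := by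
    intro s' g
    by_cases hgs : g.1 0 = s'
    · rw [if_pos hgs, one_mul, hgs]
    · rw [histProb_eq_ite s' δ1 σ.lift t g, if_neg hgs]
      simp [hgs]
  have hLHS : BC s δ1 δ2 σ.lift (t+1)
      = ∑ a0 : A, ∑ g : Hist S A t,
          σ.p s a0 * Real.sqrt (δ1 s a0 (g.1 0) * δ2 s a0 (g.1 0)) *
            Real.sqrt (histProb (g.1 0) δ1 σ.lift t g * histProb (g.1 0) δ2 σ.lift t g) := by
    calc BC s δ1 δ2 σ.lift (t+1)
        = ∑ x : S × A × Hist S A t,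
            Real.sqrt (histProb s δ1 σ.lift (t+1) (consHist x)
              * histProb s δ2 σ.lift (t+1) (consHist x)) :=
          (Fintype.sum_equiv consHist _ _ (fun x => rfl)).symm
      _ = ∑ x : S × A × Hist S A t, (if x.1 = s then (1:ℝ) else 0) *
            (σ.p x.1 x.2.1 * Real.sqrt (δ1 x.1 x.2.1 (x.2.2.1 0) * δ2 x.1 x.2.1 (x.2.2.1 0)) *
              Real.sqrt (histProb (x.2.2.1 0) δ1 σ.lift t x.2.2
                * histProb (x.2.2.1 0) δ2 σ.lift t x.2.2)) :=
          Finset.sum_congr rfl (fun x _ => by obtain ⟨s0,a0,g⟩ := x; exact key s0 a0 g)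
      _ = _ := by
          rw [Fintype.sum_prod_type]
          rw [Finset.sum_eq_single_of_mem s (Finset.mem_univ s) (fun x _ hx => by simp [hx])]
          rw [Fintype.sum_prod_type]
          simp
  have hRHS : ∑ s' : S, (∑ a : A, σ.p s a * Real.sqrt (δ1 s a s' * δ2 s a s'))
          * BC s' δ1 δ2 σ.lift t
      = ∑ a0 : A, ∑ g : Hist S A t,
          σ.p s a0 * Real.sqrt (δ1 s a0 (g.1 0) * δ2 s a0 (g.1 0)) *
            Real.sqrt (histProb (g.1 0) δ1 σ.lift t g * histProb (g.1 0) δ2 σ.lift t g) := by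
    unfold BC
    simp only [Finset.sum_mul, Finset.mul_sum]
    calc ∑ s' : S, ∑ g : Hist S A t, ∑ a : A,
            σ.p s a * Real.sqrt (δ1 s a s' * δ2 s a s') *
              Real.sqrt (histProb s' δ1 σ.lift t g * histProb s' δ2 σ.lift t g)
        = ∑ g : Hist S A t, ∑ s' : S, ∑ a : A,
            σ.p s a * Real.sqrt (δ1 s a s' * δ2 s a s') *
              Real.sqrt (histProb s' δ1 σ.lift t g * histProb s' δ2 σ.lift t g) :=
          Finset.sum_comm
      _ = ∑ g : Hist S A t, ∑ a : A, ∑ s' : S,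
            σ.p s a * Real.sqrt (δ1 s a s' * δ2 s a s') *
              Real.sqrt (histProb s' δ1 σ.lift t g * histProb s' δ2 σ.lift t g) :=
          Finset.sum_congr rfl fun g _ => Finset.sum_comm
      _ = ∑ g : Hist S A t, ∑ a : A,
            σ.p s a * Real.sqrt (δ1 s a (g.1 0) * δ2 s a (g.1 0)) *
              Real.sqrt (histProb (g.1 0) δ1 σ.lift t g * histProb (g.1 0) δ2 σ.lift t g) := by
          refine Finset.sum_congr rfl fun g _ => Finset.sum_congr rfl fun a _ => ?_
          rw [Finset.sum_congr rfl (fun s' _ =>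
            (show σ.p s a * Real.sqrt (δ1 s a s' * δ2 s a s') *
                Real.sqrt (histProb s' δ1 σ.lift t g * histProb s' δ2 σ.lift t g)
              = (if g.1 0 = s' then σ.p s a * Real.sqrt (δ1 s a s' * δ2 s a s') *
                  Real.sqrt (histProb (g.1 0) δ1 σ.lift t g
                    * histProb (g.1 0) δ2 σ.lift t g) else 0) by
                rw [key2 s' g]
                by_cases h : g.1 0 = s'
                · rw [if_pos h, if_pos h, one_mul]
                · rw [if_neg h, if_neg h, zero_mul, mul_zero]))]
          rw [Finset.sum_ite_eq Finset.univ (g.1 0)]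
          simp
      _ = _ := Finset.sum_comm
  rw [hLHS, hRHS]

lemma BC_nonneg (init : S) (δ1 δ2 : S → A → S → ℝ)
    (πf : (t : ℕ) → Hist S A t → A → ℝ) (t : ℕ) : 0 ≤ BC init δ1 δ2 πf t :=
  Finset.sum_nonneg fun _ _ => Real.sqrt_nonneg _

lemma sum_p_eq_one (σ : StatPolicy S A act) (s : S) : ∑ a : A, σ.p s a = 1 := by
  rw [← σ.sum_one s]
  exact (Finset.sum_subset (Finset.subset_univ _) (fun a _ ha => σ.zero_off s a ha)).symm

lemma Qrow_le_one (δ1 δ2 : S → A → S → ℝ)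
    (h1 : ∀ s a s', 0 ≤ δ1 s a s') (h2 : ∀ s a s', 0 ≤ δ2 s a s')
    (hs1 : ∀ s, ∀ a ∈ act s, ∑ s', δ1 s a s' = 1)
    (hs2 : ∀ s, ∀ a ∈ act s, ∑ s', δ2 s a s' = 1)
    (σ : StatPolicy S A act) (s : S) :
    ∑ s' : S, ∑ a : A, σ.p s a * Real.sqrt (δ1 s a s' * δ2 s a s') ≤ 1 := by
  have hCS : ∀ a ∈ act s, ∑ s' : S, Real.sqrt (δ1 s a s' * δ2 s a s') ≤ 1 := by
    intro a ha
    have hrw : ∀ s' : S, Real.sqrt (δ1 s a s' * δ2 s a s')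
        = Real.sqrt (δ1 s a s') * Real.sqrt (δ2 s a s') :=
      fun s' => Real.sqrt_mul (h1 s a s') _
    have hsq := Finset.sum_mul_sq_le_sq_mul_sq Finset.univ
      (fun s' => Real.sqrt (δ1 s a s')) (fun s' => Real.sqrt (δ2 s a s'))
    have e1 : ∑ s' : S, Real.sqrt (δ1 s a s') ^ 2 = 1 := by
      rw [Finset.sum_congr rfl (fun s' _ => Real.sq_sqrt (h1 s a s')), hs1 s a ha]
    have e2 : ∑ s' : S, Real.sqrt (δ2 s a s') ^ 2 = 1 := by
      rw [Finset.sum_congr rfl (fun s' _ => Real.sq_sqrt (h2 s a s')), hs2 s a ha]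
    rw [e1, e2, one_mul] at hsq
    have hnn : 0 ≤ ∑ s' : S, Real.sqrt (δ1 s a s') * Real.sqrt (δ2 s a s') :=
      Finset.sum_nonneg fun s' _ => mul_nonneg (Real.sqrt_nonneg _) (Real.sqrt_nonneg _)
    rw [Finset.sum_congr rfl (fun s' _ => hrw s')]
    nlinarith
  calc ∑ s' : S, ∑ a : A, σ.p s a * Real.sqrt (δ1 s a s' * δ2 s a s')
      = ∑ a : A, ∑ s' : S, σ.p s a * Real.sqrt (δ1 s a s' * δ2 s a s') := Finset.sum_comm
    _ = ∑ a : A, σ.p s a * ∑ s' : S, Real.sqrt (δ1 s a s' * δ2 s a s') :=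
        Finset.sum_congr rfl fun a _ => (Finset.mul_sum _ _ _).symm
    _ ≤ ∑ a : A, σ.p s a * 1 := by
        refine Finset.sum_le_sum fun a _ => ?_
        by_cases ha : a ∈ act s
        · exact mul_le_mul_of_nonneg_left (hCS a ha) (σ.nonneg s a)
        · rw [σ.zero_off s a ha, zero_mul, zero_mul]
    _ = 1 := by rw [Finset.sum_congr rfl fun a _ => mul_one _, sum_p_eq_one σ s]

/-- Powers of the "Bhattacharyya kernel" applied from the initial distribution. -/
noncomputable def Kmat (init : S) (Q : S → S → ℝ) : ℕ → S → ℝ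
  | 0 => fun s => if s = init then 1 else 0
  | (t+1) => fun s' => ∑ u : S, Kmat init Q t u * Q u s'

lemma Kmat_nonneg (init : S) (Q : S → S → ℝ) (hQ : ∀ s s', 0 ≤ Q s s') :
    ∀ t s, 0 ≤ Kmat init Q t s := by
  intro t
  induction t with
  | zero => intro s; simp only [Kmat]; split <;> norm_num
  | succ t ih =>
    intro s
    exact Finset.sum_nonneg fun u _ => mul_nonneg (ih u) (hQ u s)

lemma BC_split (δ1 δ2 : S → A → S → ℝ)
    (h1 : ∀ s a s', 0 ≤ δ1 s a s') (h2 : ∀ s a s', 0 ≤ δ2 s a s')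
    (σ : StatPolicy S A act) (init : S) :
    ∀ t u : ℕ, BC init δ1 δ2 σ.lift (t + u)
      = ∑ s : S, Kmat init (fun s s' => ∑ a : A, σ.p s a *
          Real.sqrt (δ1 s a s' * δ2 s a s')) t s * BC s δ1 δ2 σ.lift u := by
  intro t
  induction t with
  | zero =>
    intro u
    simp only [Kmat, Nat.zero_add, ite_mul, one_mul, zero_mul]
    rw [Finset.sum_ite_eq' Finset.univ init]
    simp
  | succ t ih =>
    intro u
    have harith : t + 1 + u = t + (u + 1) := by omega
    rw [harith, ih (u + 1)]
    have hrw : ∀ s : S, Kmat init (fun s s' => ∑ a : A, σ.p s a *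
            Real.sqrt (δ1 s a s' * δ2 s a s')) t s * BC s δ1 δ2 σ.lift (u+1)
        = ∑ s' : S, Kmat init (fun s s' => ∑ a : A, σ.p s a *
            Real.sqrt (δ1 s a s' * δ2 s a s')) t s *
          ((∑ a : A, σ.p s a * Real.sqrt (δ1 s a s' * δ2 s a s')) * BC s' δ1 δ2 σ.lift u) := by
      intro s
      rw [BC_succ δ1 δ2 h1 h2 σ s u, Finset.mul_sum]
    rw [Finset.sum_congr rfl fun s _ => hrw s, Finset.sum_comm]
    refine Finset.sum_congr rfl fun s' _ => ?_
    show _ = Kmat init _ (t+1) s' * _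
    simp only [Kmat, Finset.sum_mul]
    exact Finset.sum_congr rfl fun s _ => by rw [← Finset.sum_mul, mul_assoc]

lemma Qentry_nonneg (δ1 δ2 : S → A → S → ℝ)
    (h1 : ∀ s a s', 0 ≤ δ1 s a s') (σ : StatPolicy S A act) (s s' : S) :
    0 ≤ ∑ a : A, σ.p s a * Real.sqrt (δ1 s a s' * δ2 s a s') :=
  Finset.sum_nonneg fun a _ => mul_nonneg (σ.nonneg s a) (Real.sqrt_nonneg _)

lemma BC_succ_le (δ1 δ2 : S → A → S → ℝ)
    (h1 : ∀ s a s', 0 ≤ δ1 s a s') (h2 : ∀ s a s', 0 ≤ δ2 s a s')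
    (hs1 : ∀ s, ∀ a ∈ act s, ∑ s', δ1 s a s' = 1)
    (hs2 : ∀ s, ∀ a ∈ act s, ∑ s', δ2 s a s' = 1)
    (σ : StatPolicy S A act) :
    ∀ t (s : S), BC s δ1 δ2 σ.lift (t+1) ≤ BC s δ1 δ2 σ.lift t := by
  intro t
  induction t with
  | zero =>
    intro s
    rw [BC_succ δ1 δ2 h1 h2 σ s 0, BC_zero s δ1 δ2 σ.lift]
    calc ∑ s' : S, (∑ a : A, σ.p s a * Real.sqrt (δ1 s a s' * δ2 s a s'))
            * BC s' δ1 δ2 σ.lift 0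
        = ∑ s' : S, ∑ a : A, σ.p s a * Real.sqrt (δ1 s a s' * δ2 s a s') := by
          refine Finset.sum_congr rfl fun s' _ => ?_
          rw [BC_zero s' δ1 δ2 σ.lift, mul_one]
      _ ≤ 1 := Qrow_le_one δ1 δ2 h1 h2 hs1 hs2 σ s
  | succ t ih =>
    intro s
    rw [BC_succ δ1 δ2 h1 h2 σ s (t+1), BC_succ δ1 δ2 h1 h2 σ s t]
    exact Finset.sum_le_sum fun s' _ =>
      mul_le_mul_of_nonneg_left (ih s') (Qentry_nonneg δ1 δ2 h1 σ s s')

end Aux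

/-- **Exponential convergence of the Bhattacharyya coefficient.**
If a stationary policy `σ` achieves asymptotic perfect detection for a binary MMDP `M`,
i.e. `B(t,σ) → 0`, then the convergence is exponentially fast: there are `c > 0` and
`0 < λ < 1` with `B(t,σ) ≤ c·λᵗ` for all `t`. -/
theorem BC_exponential_decay_of_APD
    {S A : Type} [Fintype S] [Fintype A] [DecidableEq S]
    (M : BinMMDP S A) (σ : StatPolicy S A M.act)
    (hAPD : Tendsto (fun t => BC M.init (M.δ 0) (M.δ 1) σ.lift t) atTop (nhds 0)) :
    ∃ c > 0, ∃ l : ℝ, 0 < l ∧ l < 1 ∧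
      ∀ t : ℕ, BC M.init (M.δ 0) (M.δ 1) σ.lift t ≤ c * l ^ t := by
  have h1 := M.δ_nonneg 0
  have h2 := M.δ_nonneg 1
  have hs1 := M.δ_sum 0
  have hs2 := M.δ_sum 1
  have hKnn : ∀ t s, 0 ≤ Kmat M.init (fun s s' => ∑ a : A, σ.p s a * Real.sqrt (M.δ 0 s a s' * M.δ 1 s a s')) t s :=
    fun t s => Kmat_nonneg _ _ (fun u v => Qentry_nonneg _ _ h1 σ u v) t s
  have hsplit := BC_split (M.δ 0) (M.δ 1) h1 h2 σ M.init
  have hBnn : ∀ (t : ℕ) (s : S), 0 ≤ BC s (M.δ 0) (M.δ 1) σ.lift t :=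
    fun t s => BC_nonneg s _ _ _ t
  have hanti : Antitone (fun t => BC M.init (M.δ 0) (M.δ 1) σ.lift t) :=
    antitone_nat_of_succ_le (fun n => BC_succ_le (M.δ 0) (M.δ 1) h1 h2 hs1 hs2 σ n M.init)
  have hreach : ∀ s : S, ∃ N : ℕ, ∀ u ≥ N,
      (∃ t, 0 < Kmat M.init (fun s s' => ∑ a : A, σ.p s a * Real.sqrt (M.δ 0 s a s' * M.δ 1 s a s')) t s) → BC s (M.δ 0) (M.δ 1) σ.lift u ≤ 1/2 := by
    intro s
    by_cases hs : ∃ t, 0 < Kmat M.init (fun s s' => ∑ a : A, σ.p s a * Real.sqrt (M.δ 0 s a s' * M.δ 1 s a s')) t s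
    · obtain ⟨t, ht⟩ := hs
      have hten : Tendsto (fun u => BC M.init (M.δ 0) (M.δ 1) σ.lift (t + u) / Kmat M.init (fun s s' => ∑ a : A, σ.p s a * Real.sqrt (M.δ 0 s a s' * M.δ 1 s a s')) t s)
          atTop (nhds 0) := by
        have h := hAPD.comp (tendsto_add_atTop_nat t)
        have h' : Tendsto (fun u => BC M.init (M.δ 0) (M.δ 1) σ.lift (t + u)) atTop (nhds 0) := by
          simpa only [Function.comp_def, Nat.add_comm t] using h
        simpa using h'.div_const (Kmat M.init (fun s s' => ∑ a : A, σ.p s a * Real.sqrt (M.δ 0 s a s' * M.δ 1 s a s')) t s)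
      obtain ⟨N, hN⟩ := Filter.eventually_atTop.mp
        (hten.eventually_lt_const (by norm_num : (0:ℝ) < 1/2))
      refine ⟨N, fun u hu _ => ?_⟩
      have hKW : Kmat M.init (fun s s' => ∑ a : A, σ.p s a * Real.sqrt (M.δ 0 s a s' * M.δ 1 s a s')) t s * BC s (M.δ 0) (M.δ 1) σ.lift u ≤ BC M.init (M.δ 0) (M.δ 1) σ.lift (t + u) := by
        rw [hsplit t u]
        exact Finset.single_le_sum
          (f := fun s'' => Kmat M.init (fun s s' => ∑ a : A, σ.p s a * Real.sqrt (M.δ 0 s a s' * M.δ 1 s a s')) t s'' * BC s'' (M.δ 0) (M.δ 1) σ.lift u)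
          (fun s'' _ => mul_nonneg (hKnn t s'') (hBnn u s'')) (Finset.mem_univ s)
      have h3 : BC s (M.δ 0) (M.δ 1) σ.lift u ≤ BC M.init (M.δ 0) (M.δ 1) σ.lift (t + u) / Kmat M.init (fun s s' => ∑ a : A, σ.p s a * Real.sqrt (M.δ 0 s a s' * M.δ 1 s a s')) t s := by
        rw [le_div_iff₀ ht]; linarith
      exact h3.trans (le_of_lt (hN u hu))
    · exact ⟨0, fun u _ h => absurd h hs⟩
  choose f hf using hreach
  set T := 1 + Finset.univ.sup f with hTdef
  have hT1 : 1 ≤ T := Nat.le_add_right 1 _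
  have hhalf : ∀ s : S, (∃ t, 0 < Kmat M.init (fun s s' => ∑ a : A, σ.p s a * Real.sqrt (M.δ 0 s a s' * M.δ 1 s a s')) t s) →
      BC s (M.δ 0) (M.δ 1) σ.lift T ≤ 1/2 :=
    fun s h => hf s T (le_trans (Finset.le_sup (Finset.mem_univ s)) (Nat.le_add_left _ 1)) h
  have hgeo : ∀ k : ℕ, BC M.init (M.δ 0) (M.δ 1) σ.lift (k*T) ≤ (1/2:ℝ)^k := by
    intro k
    induction k with
    | zero => simp [BC_zero]
    | succ k ih =>
      have harith : (k+1)*T = k*T + T := by ring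
      rw [harith, hsplit (k*T) T]
      calc ∑ s : S, Kmat M.init (fun s s' => ∑ a : A, σ.p s a * Real.sqrt (M.δ 0 s a s' * M.δ 1 s a s')) (k*T) s * BC s (M.δ 0) (M.δ 1) σ.lift T
          ≤ ∑ s : S, Kmat M.init (fun s s' => ∑ a : A, σ.p s a * Real.sqrt (M.δ 0 s a s' * M.δ 1 s a s')) (k*T) s * (1/2) := by
            refine Finset.sum_le_sum fun s _ => ?_
            rcases lt_or_eq_of_le (hKnn (k*T) s) with hK | hK
            · exact mul_le_mul_of_nonneg_left (hhalf s ⟨k*T, hK⟩) (le_of_lt hK)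
            · rw [← hK, zero_mul, zero_mul]
        _ = (1/2) * ∑ s : S, Kmat M.init (fun s s' => ∑ a : A, σ.p s a * Real.sqrt (M.δ 0 s a s' * M.δ 1 s a s')) (k*T) s
              * BC s (M.δ 0) (M.δ 1) σ.lift 0 := by
            rw [Finset.mul_sum]
            exact Finset.sum_congr rfl fun s _ => by rw [BC_zero s _ _ σ.lift]; ring
        _ = (1/2) * BC M.init (M.δ 0) (M.δ 1) σ.lift (k*T + 0) := by rw [hsplit (k*T) 0]
        _ ≤ (1/2) * (1/2)^k := by
            rw [Nat.add_zero]
            linarith [ih]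
        _ = (1/2:ℝ)^(k+1) := by ring
  have hTpos : (0:ℝ) < (T:ℝ) := by
    exact_mod_cast Nat.lt_of_lt_of_le Nat.zero_lt_one hT1
  refine ⟨2, by norm_num, (1/2:ℝ) ^ ((T:ℝ)⁻¹), Real.rpow_pos_of_pos (by norm_num) _,
    Real.rpow_lt_one (by norm_num) (by norm_num) (inv_pos.mpr hTpos), ?_⟩
  intro t
  have hstep1 : BC M.init (M.δ 0) (M.δ 1) σ.lift t ≤ BC M.init (M.δ 0) (M.δ 1) σ.lift ((t/T)*T) := hanti (Nat.div_mul_le_self t T)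
  have hstep2 : BC M.init (M.δ 0) (M.δ 1) σ.lift ((t/T)*T) ≤ (1/2:ℝ)^(t/T) := hgeo (t/T)
  have hlt : (t : ℕ) < ((t/T) + 1) * T :=
    (Nat.div_lt_iff_lt_mul (Nat.lt_of_lt_of_le Nat.zero_lt_one hT1)).mp (Nat.lt_succ_self (t/T))
  have hexp : (t:ℝ)/(T:ℝ) - 1 ≤ ((t/T : ℕ):ℝ) := by
    have h' : (t:ℝ)/(T:ℝ) < ((t/T:ℕ):ℝ) + 1 := by
      rw [div_lt_iff₀ hTpos]
      exact_mod_cast hlt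
    linarith
  have hb : ((1/2:ℝ))^(t/T : ℕ) ≤ 2 * ((1/2:ℝ) ^ ((T:ℝ)⁻¹))^t := by
    have e1 : ((1/2:ℝ))^(t/T : ℕ) = (1/2:ℝ) ^ (((t/T:ℕ):ℝ)) := (Real.rpow_natCast _ _).symm
    have e2 : ((1/2:ℝ) ^ ((T:ℝ)⁻¹))^t = (1/2:ℝ) ^ ((T:ℝ)⁻¹ * (t:ℝ)) := by
      rw [← Real.rpow_natCast ((1/2:ℝ) ^ ((T:ℝ)⁻¹)) t, ← Real.rpow_mul (by norm_num)]
    have e3 : (T:ℝ)⁻¹ * (t:ℝ) = (t:ℝ)/(T:ℝ) := by ring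
    rw [e1, e2, e3]
    have h4 : (1/2:ℝ) ^ (((t/T:ℕ):ℝ)) ≤ (1/2:ℝ)^((t:ℝ)/(T:ℝ) - 1) :=
      Real.rpow_le_rpow_of_exponent_ge (by norm_num) (by norm_num) hexp
    have h5 : (1/2:ℝ)^((t:ℝ)/(T:ℝ) - 1) = 2 * (1/2:ℝ)^((t:ℝ)/(T:ℝ)) := by
      rw [Real.rpow_sub (by norm_num), Real.rpow_one]; ring
    linarith
  exact (hstep1.trans hstep2).trans hb
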